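/- Let H be self-adjoint on ℋ, 𝒟 = {ℋ_ν} an orthogonal decomposition, ψ₀ a unit vector, and ε, δ' > 0. If for every ν, limsup_{T→∞} (1/T)·∫₀^T (‖P_ν ψ_t‖² − d_ν/D)² dt < ε²·(d_ν/D)²·(δ'/N), then the system (H, 𝒟, ψ₀) is ε-δ'-normal in the strong sense. -/

import Mathlib

open MeasureTheory Filter

noncomputable section

/-- Time evolution `ψ_t = exp(−iHt)ψ₀`. -/
def timeEvolved (D : ℕ) (H : EuclideanSpace ℂ (Fin D) →L[ℂ] EuclideanSpace ℂ (Fin D))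
    (ψ₀ : EuclideanSpace ℂ (Fin D)) (t : ℝ) : EuclideanSpace ℂ (Fin D) :=
  NormedSpace.exp ((-(t : ℂ) * Complex.I) • H) ψ₀

/-- `p t` holds for `(1−δ')`-most times `t` in the long run. -/
def mostTimes (δ' : ℝ) (p : ℝ → Prop) : Prop :=
  1 - δ' ≤ liminf (fun T : ℝ =>
    (volume {t : ℝ | t ∈ Set.Ioo 0 T ∧ p t}).toReal / T) atTop

/-- The system `(H, 𝒟, ψ₀)` is `ε`-`δ'`-normal in von Neumann's sense. -/
def normalVN (D N : ℕ) (H : EuclideanSpace ℂ (Fin D) →L[ℂ] EuclideanSpace ℂ (Fin D))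
    (V : Fin N → Submodule ℂ (EuclideanSpace ℂ (Fin D))) (dv : Fin N → ℕ)
    (ψ₀ : EuclideanSpace ℂ (Fin D)) (ε δ' : ℝ) : Prop :=
  mostTimes δ' (fun t => ∀ ν : Fin N,
    |‖(Submodule.orthogonalProjectionOnto (V ν) (timeEvolved D H ψ₀ t) : EuclideanSpace ℂ (Fin D))‖ ^ 2
        - (dv ν : ℝ) / D|
      < ε * Real.sqrt ((dv ν : ℝ) / (N * D)))

/-- The system `(H, 𝒟, ψ₀)` is `ε`-`δ'`-normal in the strong sense. -/
def normalStrong (D N : ℕ) (H : EuclideanSpace ℂ (Fin D) →L[ℂ] EuclideanSpace ℂ (Fin D))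
    (V : Fin N → Submodule ℂ (EuclideanSpace ℂ (Fin D))) (dv : Fin N → ℕ)
    (ψ₀ : EuclideanSpace ℂ (Fin D)) (ε δ' : ℝ) : Prop :=
  mostTimes δ' (fun t => ∀ ν : Fin N,
    |‖(Submodule.orthogonalProjectionOnto (V ν) (timeEvolved D H ψ₀ t) : EuclideanSpace ℂ (Fin D))‖ ^ 2
        - (dv ν : ℝ) / D|
      < ε * ((dv ν : ℝ) / D))

set_option maxHeartbeats 1000000 in
lemma timeEvolved_norm' (D : ℕ) (H : EuclideanSpace ℂ (Fin D) →L[ℂ] EuclideanSpace ℂ (Fin D))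
    (hH : IsSelfAdjoint H) (ψ₀ : EuclideanSpace ℂ (Fin D)) (t : ℝ) :
    ‖timeEvolved D H ψ₀ t‖ = ‖ψ₀‖ := by
  have hc : star (-(t:ℂ) * Complex.I) = -(-(t:ℂ) * Complex.I) := by
    simp [Complex.ext_iff]
  have hskew : (-(t:ℂ) * Complex.I) • H ∈
      skewAdjoint (EuclideanSpace ℂ (Fin D) →L[ℂ] EuclideanSpace ℂ (Fin D)) := by
    rw [skewAdjoint.mem_iff, star_smul, hH.star_eq, hc]; module
  let +nondep : NormedAlgebra ℚ (EuclideanSpace ℂ (Fin D) →L[ℂ] EuclideanSpace ℂ (Fin D)) :=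
    .restrictScalars ℚ ℂ _
  exact ContinuousLinearMap.norm_map_of_mem_unitary
    (NormedSpace.exp_mem_unitary_of_mem_skewAdjoint hskew) ψ₀

lemma timeEvolved_continuous' (D : ℕ) (H : EuclideanSpace ℂ (Fin D) →L[ℂ] EuclideanSpace ℂ (Fin D))
    (ψ₀ : EuclideanSpace ℂ (Fin D)) :
    Continuous fun t : ℝ => timeEvolved D H ψ₀ t := by
  let +nondep : NormedAlgebra ℚ (EuclideanSpace ℂ (Fin D) →L[ℂ] EuclideanSpace ℂ (Fin D)) :=
    .restrictScalars ℚ ℂ _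
  have h1 : Continuous fun t : ℝ => NormedSpace.exp ((-(t : ℂ) * Complex.I) • H) :=
    NormedSpace.exp_continuous.comp (by fun_prop)
  exact h1.clm_apply continuous_const


set_option maxHeartbeats 4000000 in
/-- if for every `ν` the time average of `(‖P_ν ψ_t‖² − d_ν/D)²` is (in the
`limsup` sense) below `ε²·(d_ν/D)²·(δ'/N)`, then the system is `ε`-`δ'`-normal in
the strong sense. -/
theorem normality_criterion_strong (D N : ℕ) (hD : 1 ≤ D)
    (H : EuclideanSpace ℂ (Fin D) →L[ℂ] EuclideanSpace ℂ (Fin D)) (hH : IsSelfAdjoint H)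
    (V : Fin N → Submodule ℂ (EuclideanSpace ℂ (Fin D)))
    (horth : ∀ ν ν', ν ≠ ν' → Submodule.IsOrtho (V ν) (V ν'))
    (hspan : (⨆ ν, V ν) = ⊤)
    (dv : Fin N → ℕ) (hdim : ∀ ν, Module.finrank ℂ (V ν) = dv ν)
    (hsum : ∑ ν, dv ν = D)
    (ψ₀ : EuclideanSpace ℂ (Fin D)) (hψ₀ : ‖ψ₀‖ = 1)
    (ε δ' : ℝ) (hε : 0 < ε) (hδ' : 0 < δ')
    (hG : ∀ ν : Fin N,
      limsup (fun T : ℝ => (1 / T) *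
          ∫ t in (0:ℝ)..T,
            (‖(Submodule.orthogonalProjectionOnto (V ν) (timeEvolved D H ψ₀ t) :
                EuclideanSpace ℂ (Fin D))‖ ^ 2 - (dv ν : ℝ) / D) ^ 2) atTop
        < ε ^ 2 * ((dv ν : ℝ) / D) ^ 2 * (δ' / N)) :
    normalStrong D N H V dv ψ₀ ε δ' := by
  unfold normalStrong mostTimes

  have hDpos : (0:ℝ) < D := by exact_mod_cast hD
  set f : Fin N → ℝ → ℝ := fun ν t =>
    ‖(Submodule.orthogonalProjectionOnto (V ν) (timeEvolved D H ψ₀ t) : EuclideanSpace ℂ (Fin D))‖ ^ 2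
      - (dv ν : ℝ) / D with hfdef
  -- continuity
  have hcont : ∀ ν, Continuous (f ν) := by
    intro ν
    have h1 : Continuous fun t : ℝ =>
        ((Submodule.orthogonalProjectionOnto (V ν) (timeEvolved D H ψ₀ t)) : EuclideanSpace ℂ (Fin D)) :=
      continuous_subtype_val.comp
        ((Submodule.orthogonalProjectionOnto (V ν)).continuous.comp (timeEvolved_continuous' D H ψ₀))
    exact ((h1.norm.pow 2).sub continuous_const)
  -- bound on f
  have hratio : ∀ ν, (dv ν : ℝ) / D ≤ 1 := by
    intro ν
    rw [div_le_one hDpos]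
    exact_mod_cast hsum ▸ Finset.single_le_sum (f := fun ν => dv ν) (fun _ _ => Nat.zero_le _)
      (Finset.mem_univ ν)
  have hfle : ∀ ν t, |f ν t| ≤ 1 := by
    intro ν t
    have hP : ‖(Submodule.orthogonalProjectionOnto (V ν) (timeEvolved D H ψ₀ t) :
        EuclideanSpace ℂ (Fin D))‖ ≤ 1 := by
      have h2 : ‖Submodule.orthogonalProjectionOnto (V ν) (timeEvolved D H ψ₀ t)‖ ≤
          1 * ‖timeEvolved D H ψ₀ t‖ :=
        (Submodule.orthogonalProjectionOnto (V ν)).le_of_opNorm_le (Submodule.orthogonalProjectionOnto_norm_le (V ν)) _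
      rw [timeEvolved_norm' D H hH ψ₀ t, hψ₀, mul_one] at h2
      exact h2
    have hPn : (0:ℝ) ≤ ‖(Submodule.orthogonalProjectionOnto (V ν) (timeEvolved D H ψ₀ t) :
        EuclideanSpace ℂ (Fin D))‖ := norm_nonneg _
    have hdn : (0:ℝ) ≤ (dv ν : ℝ) / D := by positivity
    rw [abs_le]
    constructor
    · simp only [hfdef]; nlinarith [hratio ν]
    · simp only [hfdef]; nlinarith
  -- positivity of dimensions
  have hdpos : ∀ ν, (0:ℝ) < (dv ν : ℝ) / D := by
    intro ν
    rcases Nat.eq_zero_or_pos (dv ν) with h0 | hpos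
    · exfalso
      have hbot : V ν = ⊥ := Submodule.finrank_eq_zero.mp (by rw [hdim ν, h0])
      have hzero : ∀ t : ℝ, f ν t = 0 := by
        intro t
        simp [hfdef, hbot, h0]
      have := hG ν
      rw [show (fun T : ℝ => (1 / T) *
          ∫ t in (0:ℝ)..T,
            (‖(Submodule.orthogonalProjectionOnto (V ν) (timeEvolved D H ψ₀ t) :
                EuclideanSpace ℂ (Fin D))‖ ^ 2 - (dv ν : ℝ) / D) ^ 2) = fun _ => (0:ℝ) from ?_]
        at this
      · rw [limsup_const (0:ℝ), h0] at this
        simp at this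
      · funext T
        have : ∀ t : ℝ, (‖(Submodule.orthogonalProjectionOnto (V ν) (timeEvolved D H ψ₀ t) :
            EuclideanSpace ℂ (Fin D))‖ ^ 2 - (dv ν : ℝ) / D) ^ 2 = 0 := by
          intro t
          have := hzero t
          simp only [hfdef] at this
          rw [this]; ring
        simp only [this]; simp
    · positivity
  set c : Fin N → ℝ := fun ν => ε * ((dv ν : ℝ) / D) with hcdef
  have hcpos : ∀ ν, 0 < c ν := fun ν => mul_pos hε (hdpos ν)
  -- integrability
  have hint : ∀ ν (T : ℝ), IntervalIntegrable (fun t => (f ν t)^2) volume 0 T :=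
    fun ν T => ((hcont ν).pow 2).intervalIntegrable 0 T
  set A : Fin N → ℝ → ℝ := fun ν T => (1/T) * ∫ t in (0:ℝ)..T, (f ν t)^2 with hAdef
  -- A is bounded by 1 for T ≥ 1
  have hA_bound : ∀ ν, ∀ T : ℝ, 1 ≤ T → A ν T ≤ 1 := by
    intro ν T hT
    have hT0 : (0:ℝ) < T := lt_of_lt_of_le one_pos hT
    have h1 : (∫ t in (0:ℝ)..T, (f ν t)^2) ≤ ∫ _ in (0:ℝ)..T, (1:ℝ) := by
      apply intervalIntegral.integral_mono_on hT0.le (hint ν T) intervalIntegrable_const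
      intro x _
      have := hfle ν x
      nlinarith [abs_nonneg (f ν x), le_abs_self (f ν x), neg_abs_le (f ν x)]
    rw [intervalIntegral.integral_const, smul_eq_mul, sub_zero, mul_one] at h1
    calc A ν T ≤ (1/T) * T := by
          apply mul_le_mul_of_nonneg_left h1 (by positivity)
      _ = 1 := by field_simp
  -- eventual bound from hG
  have hAlt : ∀ ν, ∀ᶠ T in atTop, A ν T < ε ^ 2 * ((dv ν : ℝ) / D) ^ 2 * (δ' / N) := by
    intro ν
    have hbd : IsBoundedUnder (· ≤ ·) atTop (A ν) :=
      ⟨1, eventually_map.2 ((eventually_ge_atTop 1).mono fun T hT => hA_bound ν T hT)⟩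
    exact eventually_lt_of_limsup_lt (hG ν) hbd
  -- Markov inequality
  have hMarkov : ∀ ν (T : ℝ), 0 < T →
      (volume {t : ℝ | t ∈ Set.Ioo 0 T ∧ c ν ≤ |f ν t|}).toReal
        ≤ (∫ t in (0:ℝ)..T, (f ν t)^2) / (c ν)^2 := by
    intro ν T hT
    set S : Set ℝ := {x : ℝ | (c ν)^2 ≤ (f ν x)^2} with hSdef
    have hSmeas : MeasurableSet S :=
      (isClosed_le continuous_const ((hcont ν).pow 2)).measurableSet
    have hmark := mul_meas_ge_le_integral_of_nonneg
      (μ := volume.restrict (Set.Ioc 0 T)) (f := fun t => (f ν t)^2)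
      (Eventually.of_forall fun t => sq_nonneg _)
      (((hcont ν).pow 2).integrableOn_Ioc) ((c ν)^2)
    rw [measureReal_def, Measure.restrict_apply hSmeas] at hmark
    have heq : ∫ x, (f ν x)^2 ∂(volume.restrict (Set.Ioc 0 T))
        = ∫ t in (0:ℝ)..T, (f ν t)^2 := (intervalIntegral.integral_of_le hT.le).symm
    rw [heq] at hmark
    have hsub : {t : ℝ | t ∈ Set.Ioo 0 T ∧ c ν ≤ |f ν t|} ⊆ S ∩ Set.Ioc 0 T := by
      rintro t ⟨ht, hle⟩
      refine ⟨?_, Set.Ioo_subset_Ioc_self ht⟩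
      show (c ν)^2 ≤ (f ν t)^2
      calc (c ν)^2 ≤ |f ν t|^2 := pow_le_pow_left₀ (hcpos ν).le hle 2
        _ = (f ν t)^2 := sq_abs _
    have hfin : volume (S ∩ Set.Ioc 0 T) ≠ ⊤ :=
      ((measure_mono Set.inter_subset_right).trans_lt measure_Ioc_lt_top).ne
    have h1 : (volume {t : ℝ | t ∈ Set.Ioo 0 T ∧ c ν ≤ |f ν t|}).toReal
        ≤ (volume (S ∩ Set.Ioc 0 T)).toReal :=
      ENNReal.toReal_mono hfin (measure_mono hsub)
    have h2 : (volume (S ∩ Set.Ioc 0 T)).toReal ≤ (∫ t in (0:ℝ)..T, (f ν t)^2) / (c ν)^2 := by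
      rw [le_div_iff₀ (pow_pos (hcpos ν) 2)]
      linarith [hmark]
    exact h1.trans h2
  -- the key eventual estimate
  have key : ∀ᶠ T in atTop,
      1 - δ' ≤ (volume {t : ℝ | t ∈ Set.Ioo 0 T ∧ ∀ ν, |f ν t| < c ν}).toReal / T := by
    have hall : ∀ᶠ T in atTop, ∀ ν, A ν T < ε ^ 2 * ((dv ν : ℝ) / D) ^ 2 * (δ' / N) :=
      eventually_all.mpr hAlt
    filter_upwards [hall, eventually_ge_atTop (1:ℝ)] with T hAT hT1
    have hT : (0:ℝ) < T := lt_of_lt_of_le one_pos hT1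
    set G := {t : ℝ | t ∈ Set.Ioo 0 T ∧ ∀ ν, |f ν t| < c ν} with hGdef
    set B : Fin N → Set ℝ := fun ν => {t : ℝ | t ∈ Set.Ioo 0 T ∧ c ν ≤ |f ν t|} with hBdef
    have hcover : Set.Ioo (0:ℝ) T ⊆ G ∪ ⋃ ν, B ν := by
      intro t ht
      by_cases h : ∀ ν, |f ν t| < c ν
      · exact Or.inl ⟨ht, h⟩
      · push_neg at h
        obtain ⟨ν, hν⟩ := h
        exact Or.inr (Set.mem_iUnion.2 ⟨ν, ht, hν⟩)
    have hGfin : volume G ≠ ⊤ :=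
      ((measure_mono (fun t ht => ht.1)).trans_lt measure_Ioo_lt_top).ne
    have hBfin : ∀ ν, volume (B ν) ≠ ⊤ := fun ν =>
      ((measure_mono (fun t ht => ht.1)).trans_lt measure_Ioo_lt_top).ne
    have hle1 : volume (Set.Ioo (0:ℝ) T) ≤ volume G + ∑ ν, volume (B ν) := by
      calc volume (Set.Ioo (0:ℝ) T) ≤ volume (G ∪ ⋃ ν, B ν) := measure_mono hcover
        _ ≤ volume G + volume (⋃ ν, B ν) := measure_union_le _ _
        _ ≤ volume G + ∑ ν, volume (B ν) := by
            gcongr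
            exact (measure_iUnion_le B).trans (le_of_eq (tsum_fintype _))
    have hRfin : volume G + ∑ ν, volume (B ν) ≠ ⊤ := by
      apply ENNReal.add_ne_top.mpr
      exact ⟨hGfin, (ENNReal.sum_lt_top.mpr fun ν _ => (hBfin ν).lt_top).ne⟩
    have hle2 : T ≤ (volume G).toReal + ∑ ν, (volume (B ν)).toReal := by
      have h := ENNReal.toReal_mono hRfin hle1
      rw [Real.volume_Ioo, sub_zero, ENNReal.toReal_ofReal hT.le,
        ENNReal.toReal_add hGfin ((ENNReal.sum_lt_top.mpr fun ν _ => (hBfin ν).lt_top).ne),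
        ENNReal.toReal_sum (fun ν _ => hBfin ν)] at h
      exact h
    have hsumB : ∑ ν, (volume (B ν)).toReal ≤ T * δ' := by
      have hterm : ∀ ν, (volume (B ν)).toReal ≤ T * (δ' / N) := by
        intro ν
        have h1 : (volume (B ν)).toReal ≤ (∫ t in (0:ℝ)..T, (f ν t)^2) / (c ν)^2 :=
          hMarkov ν T hT
        have h2 : (∫ t in (0:ℝ)..T, (f ν t)^2) = T * A ν T := by
          simp only [hAdef]
          field_simp
        have h3 : A ν T ≤ (c ν)^2 * (δ' / N) := by
          have := hAT ν
          have hce : ε ^ 2 * ((dv ν : ℝ) / D) ^ 2 * (δ' / N) = (c ν)^2 * (δ' / N) := by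
            simp only [hcdef]; ring
          linarith [hce ▸ this]
        calc (volume (B ν)).toReal ≤ (T * A ν T) / (c ν)^2 := h2 ▸ h1
          _ ≤ (T * ((c ν)^2 * (δ' / N))) / (c ν)^2 := by
              gcongr
          _ = T * (δ' / N) := by
              rw [show T * ((c ν)^2 * (δ' / N)) = (c ν)^2 * (T * (δ' / N)) by ring,
                mul_div_cancel_left₀ _ (pow_pos (hcpos ν) 2).ne']
      calc ∑ ν, (volume (B ν)).toReal ≤ ∑ _ν : Fin N, T * (δ' / N) :=
            Finset.sum_le_sum fun ν _ => hterm ν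
        _ ≤ T * δ' := by
            rw [Finset.sum_const, Finset.card_univ, Fintype.card_fin, nsmul_eq_mul]
            rcases Nat.eq_zero_or_pos N with h0 | hNpos
            · subst h0
              simp only [Nat.cast_zero, zero_mul]
              nlinarith
            · have hN : (0:ℝ) < N := by exact_mod_cast hNpos
              have heq : (N:ℝ) * (T * (δ' / N)) = T * δ' := by field_simp
              linarith [heq]
    have : T * (1 - δ') ≤ (volume G).toReal := by nlinarith
    rw [le_div_iff₀ hT]
    linarith [this]
  -- conclude via liminf
  have hcob : IsCoboundedUnder (· ≥ ·) atTop (fun T : ℝ =>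
      (volume {t : ℝ | t ∈ Set.Ioo 0 T ∧ ∀ ν, |f ν t| < c ν}).toReal / T) := by
    apply isCoboundedUnder_ge_of_eventually_le atTop (x := 1)
    filter_upwards [eventually_ge_atTop (1:ℝ)] with T hT1
    have hT : (0:ℝ) < T := lt_of_lt_of_le one_pos hT1
    rw [div_le_one hT]
    have : volume {t : ℝ | t ∈ Set.Ioo 0 T ∧ ∀ ν, |f ν t| < c ν} ≤ ENNReal.ofReal T := by
      refine (measure_mono (fun t ht => ht.1)).trans ?_
      rw [Real.volume_Ioo, sub_zero]
    exact (ENNReal.toReal_le_of_le_ofReal hT.le this)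
  exact le_liminf_of_le hcob key
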